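/- Let β, β̂ be measurable real functions of X, q, q̂ real numbers, Δ* = 1(β > q), Δ̂* = 1(β̂ > q̂). Under the margin condition P[|β(X) - q| ≤ t] ≤ C t^b for all t ≥ 0 (C > 0, b > 0), |E[(Δ̂*(X) - Δ*(X))(β(X) - q)]| ≤ C' (‖β̂ - β‖_∞ + |q̂ - q|)^{1+b} for a constant C' depending only on C and b. -/

import Mathlib

open MeasureTheory

/-- with `Δ* = 1(β > q)`, `Δ̂* = 1(β̂ > q̂)`, under the margin condition
`P[|β(X) - q| ≤ t] ≤ C t^b` and `T ≥ ‖β̂ - β‖_∞`,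
`|E[(Δ̂*(X) - Δ*(X))(β(X) - q)]| ≤ C (T + |q̂ - q|)^{1+b}`. -/
theorem stmt_8 {Ω 𝒳 : Type*} [MeasurableSpace Ω] [MeasurableSpace 𝒳]
    (P : Measure Ω) [IsProbabilityMeasure P]
    (X : Ω → 𝒳) (hX : Measurable X)
    (β βh : 𝒳 → ℝ) (hβ : Measurable β) (hβh : Measurable βh)
    (q qh : ℝ)
    (C b : ℝ) (hC : 0 < C) (hb : 0 < b)
    (hmargin : ∀ t ≥ (0 : ℝ), (P {ω | |β (X ω) - q| ≤ t}).toReal ≤ C * t ^ b)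
    (T : ℝ) (hT : 0 ≤ T) (hTbound : ∀ᵐ ω ∂P, |βh (X ω) - β (X ω)| ≤ T) :
    |∫ ω, ((if qh < βh (X ω) then (1 : ℝ) else 0) - (if q < β (X ω) then (1 : ℝ) else 0))
        * (β (X ω) - q) ∂P|
      ≤ C * (T + |qh - q|) ^ (1 + b) := by
  set s : ℝ := T + |qh - q| with hs_def
  have hs : 0 ≤ s := by positivity
  set A : Set Ω := {ω | |β (X ω) - q| ≤ s} with hA_def
  have hAmeas : MeasurableSet A := by
    have hm : Measurable fun ω => |β (X ω) - q| := ((hβ.comp hX).sub measurable_const).abs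
    exact hm measurableSet_Iic
  set f : Ω → ℝ := fun ω =>
    ((if qh < βh (X ω) then (1 : ℝ) else 0) - (if q < β (X ω) then (1 : ℝ) else 0))
      * (β (X ω) - q) with hf_def
  have hfmeas : Measurable f := by
    apply Measurable.mul
    · apply Measurable.sub
      · exact Measurable.ite (measurableSet_lt measurable_const (hβh.comp hX))
          measurable_const measurable_const
      · exact Measurable.ite (measurableSet_lt measurable_const (hβ.comp hX))
          measurable_const measurable_const
    · exact (hβ.comp hX).sub measurable_const
  have hbound : ∀ᵐ ω ∂P, |f ω| ≤ A.indicator (fun _ => s) ω := by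
    filter_upwards [hTbound] with ω hω
    by_cases h : (if qh < βh (X ω) then (1 : ℝ) else 0) = (if q < β (X ω) then (1 : ℝ) else 0)
    · simp only [hf_def, h, sub_self, zero_mul, abs_zero]
      exact Set.indicator_nonneg (fun _ _ => hs) ω
    · have hmem : ω ∈ A := by
        by_cases h1 : q < β (X ω)
        · have h2 : ¬ qh < βh (X ω) := by
            intro h2; exact h (by simp [h1, h2])
          push_neg at h2
          have h3 : β (X ω) - βh (X ω) ≤ T := (abs_le.mp (by rwa [abs_sub_comm] at hω)).2
          have h5 : qh - q ≤ |qh - q| := le_abs_self _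
          simp only [hA_def, Set.mem_setOf_eq]
          rw [abs_le]
          constructor <;> linarith
        · have h2 : qh < βh (X ω) := by
            by_contra h2; exact h (by simp [h1, h2])
          push_neg at h1
          have h3 : βh (X ω) - β (X ω) ≤ T := (abs_le.mp hω).2
          have h5 : q - qh ≤ |qh - q| := by rw [abs_sub_comm]; exact le_abs_self _
          simp only [hA_def, Set.mem_setOf_eq]
          rw [abs_le]
          constructor <;> linarith
      rw [Set.indicator_of_mem hmem]
      have hle : |f ω| ≤ |β (X ω) - q| := by
        simp only [hf_def, abs_mul]
        have hd : |(if qh < βh (X ω) then (1 : ℝ) else 0)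
            - (if q < β (X ω) then (1 : ℝ) else 0)| ≤ 1 := by
          split_ifs <;> norm_num
        nlinarith [abs_nonneg (β (X ω) - q)]
      exact hle.trans hmem
  have hind : Integrable (A.indicator fun _ : Ω => s) P :=
    (integrable_const s).indicator hAmeas
  have hint : Integrable f P := by
    apply Integrable.mono' (integrable_const s) hfmeas.aestronglyMeasurable
    filter_upwards [hbound] with ω hω
    calc ‖f ω‖ = |f ω| := rfl
    _ ≤ A.indicator (fun _ => s) ω := hω
    _ ≤ s := Set.indicator_le_self' (fun _ _ => hs) ω
  have h1 : |∫ ω, f ω ∂P| ≤ ∫ ω, A.indicator (fun _ => s) ω ∂P := by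
    calc |∫ ω, f ω ∂P| ≤ ∫ ω, |f ω| ∂P := norm_integral_le_integral_norm f
    _ ≤ _ := integral_mono_ae hint.abs hind hbound
  rw [integral_indicator_const _ hAmeas] at h1
  refine h1.trans ?_
  have h2 : (P A).toReal * s ≤ (C * s ^ b) * s :=
    mul_le_mul_of_nonneg_right (hmargin s hs) hs
  have h3 : s ^ (1 + b) = s * s ^ b := by
    rw [Real.rpow_add' hs (by positivity), Real.rpow_one]
  calc (P A).toReal • s = (P A).toReal * s := smul_eq_mul _ _
  _ ≤ (C * s ^ b) * s := h2
  _ = C * s ^ (1 + b) := by rw [h3]; ring
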